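/- Let T_λ(x) = ½‖Ax−y‖₂² + λ‖x‖_q^q with 0<q<1, λ>0. Let x* ∈ ℝ^N with support I = Supp(x*), and suppose: (i) A_Iᵀ(Ax*−y) + λφ₁(x*_I) = 0, where φ₁(x*_I)_i = q·sgn(x*_i)|x*_i|^{q−1} for i ∈ I; (ii) A_IᵀA_I + λq(q−1)Λ(x*_I) is positive definite, where Λ(x*_I) = diag((|x*_i|^{q−2})_{i∈I}). Then x* is a strict local minimizer of T_λ. -/

import Mathlib

open Finset Filter

private lemma taylor_aux_pos (q a : ℝ) (ha : 0 < a) (ε : ℝ) (hε : 0 < ε) :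
    ∀ᶠ t in nhds (0:ℝ), |(|a + t| ^ q - |a| ^ q - q * Real.sign a * |a| ^ (q-1) * t
      - q * (q-1) * |a| ^ (q-2) / 2 * t ^ 2)| ≤ ε * t ^ 2 := by
  set D : ℝ := q * (q - 1) * a ^ (q - 2) with hD
  set g : ℝ → ℝ := fun t => q * (a + t) ^ (q - 1) with hg
  -- g has derivative D at 0
  have hgd : HasDerivAt g D 0 := by
    have h1 : HasDerivAt (fun t : ℝ => a + t) 1 0 := (hasDerivAt_id 0).const_add a
    have h2 := (h1.rpow_const (p := q - 1) (Or.inl (by simpa using ha.ne'))).const_mul q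
    have : q - 1 - 1 = q - 2 := by ring
    rw [this] at h2
    simpa [hg, hD, mul_comm, mul_assoc, mul_left_comm] using h2
  have hlo := hasDerivAt_iff_isLittleO.mp hgd
  rw [Asymptotics.isLittleO_iff] at hlo
  have hev := hlo hε
  rw [Metric.eventually_nhds_iff] at hev
  obtain ⟨δ₀, hδ₀, hδ⟩ := hev
  set δ : ℝ := min (δ₀ / 2) (a / 2) with hδdef
  have hδpos : 0 < δ := lt_min (by linarith) (by linarith)
  have hδa : δ < a := lt_of_le_of_lt (min_le_right _ _) (by linarith)
  rw [Metric.eventually_nhds_iff]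
  refine ⟨δ, hδpos, ?_⟩
  intro t ht
  rw [Real.dist_eq, sub_zero] at ht
  -- on [-δ, δ], a + s > 0
  have hpos : ∀ s : ℝ, |s| ≤ δ → 0 < a + s := by
    intro s hs
    have := abs_le.mp hs
    linarith
  have htle : |t| ≤ δ := le_of_lt ht
  -- ρ and its derivative
  set ρ : ℝ → ℝ := fun s => (a + s) ^ q - a ^ q - q * a ^ (q - 1) * s - D / 2 * s ^ 2 with hρ
  have hρd : ∀ s : ℝ, |s| ≤ δ → HasDerivAt ρ (g s - g 0 - D * s) s := by
    intro s hs
    have h1 : HasDerivAt (fun u : ℝ => a + u) 1 s := (hasDerivAt_id s).const_add a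
    have h2 : HasDerivAt (fun u : ℝ => (a + u) ^ q) (q * (a + s) ^ (q - 1)) s := by
      simpa [mul_comm, mul_assoc, mul_left_comm] using
        h1.rpow_const (p := q) (Or.inl (hpos s hs).ne')
    have h3 : HasDerivAt (fun u : ℝ => q * a ^ (q - 1) * u) (q * a ^ (q - 1)) s := by
      simpa using (hasDerivAt_id s).const_mul (q * a ^ (q - 1))
    have h4 : HasDerivAt (fun u : ℝ => D / 2 * u ^ 2) (D / 2 * (2 * s)) s := by
      have := ((hasDerivAt_pow 2 s)).const_mul (D / 2)
      simpa [mul_comm, mul_assoc] using this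
    have := ((h2.sub_const (a ^ q)).sub h3).sub h4
    refine this.congr_deriv ?_
    simp [hg]
    ring
  -- derivative bound on the segment from 0 to t
  have hbound : ∀ s ∈ Set.uIcc (0:ℝ) t, ‖g s - g 0 - D * s‖ ≤ ε * |t| := by
    intro s hs
    have hsle : |s| ≤ |t| := by
      rcases Set.mem_uIcc.mp hs with ⟨h1, h2⟩ | ⟨h1, h2⟩
      · rw [abs_of_nonneg h1]; exact le_trans h2 (le_abs_self t)
      · rw [abs_of_nonpos h2]; exact le_trans (neg_le_neg h1) (neg_le_abs t)
    have : dist s 0 < δ₀ := by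
      rw [Real.dist_eq, sub_zero]
      exact lt_of_le_of_lt (le_trans hsle htle) (lt_of_le_of_lt (min_le_left _ _) (by linarith))
    have h := hδ this
    simp only [sub_zero, smul_eq_mul, Real.norm_eq_abs] at h ⊢
    calc |g s - g 0 - D * s| = |g s - g 0 - s * D| := by ring_nf
      _ ≤ ε * |s| := h
      _ ≤ ε * |t| := by nlinarith [abs_nonneg s]
  have hmvt := Convex.norm_image_sub_le_of_norm_hasDerivWithin_le
    (f := ρ) (f' := fun s => g s - g 0 - D * s) (s := Set.uIcc (0:ℝ) t) (C := ε * |t|)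
    (fun s hs => (hρd s (le_trans (by
      rcases Set.mem_uIcc.mp hs with ⟨h1, h2⟩ | ⟨h1, h2⟩
      · rw [abs_of_nonneg h1]; exact le_trans h2 (le_abs_self t)
      · rw [abs_of_nonpos h2]; exact le_trans (neg_le_neg h1) (neg_le_abs t)) htle)).hasDerivWithinAt)
    hbound (convex_uIcc _ _) Set.left_mem_uIcc Set.right_mem_uIcc
  have hρ0 : ρ 0 = 0 := by simp [hρ]
  have hfinal : |ρ t| ≤ ε * t ^ 2 := by
    have := hmvt
    rw [hρ0, sub_zero, sub_zero, Real.norm_eq_abs, Real.norm_eq_abs] at this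
    calc |ρ t| ≤ ε * |t| * |t| := this
      _ = ε * t ^ 2 := by rw [mul_assoc, ← abs_mul, ← sq, abs_sq]
  -- rewrite the goal to match ρ
  have habs : |a + t| = a + t := abs_of_pos (hpos t htle)
  have haabs : |a| = a := abs_of_pos ha
  have hsign : Real.sign a = 1 := Real.sign_of_pos ha
  calc |(|a + t| ^ q - |a| ^ q - q * Real.sign a * |a| ^ (q-1) * t
      - q * (q-1) * |a| ^ (q-2) / 2 * t ^ 2)| = |ρ t| := by
        rw [habs, haabs, hsign, hρ, hD]; ring_nf
    _ ≤ ε * t ^ 2 := hfinal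

private lemma taylor_aux (q a : ℝ) (ha : a ≠ 0) (ε : ℝ) (hε : 0 < ε) :
    ∀ᶠ t in nhds (0:ℝ), |(|a + t| ^ q - |a| ^ q - q * Real.sign a * |a| ^ (q-1) * t
      - q * (q-1) * |a| ^ (q-2) / 2 * t ^ 2)| ≤ ε * t ^ 2 := by
  rcases ha.lt_or_gt with hneg | hpos
  · have h := taylor_aux_pos q (-a) (by linarith) ε hε
    have hcont : Filter.Tendsto (fun t : ℝ => -t) (nhds 0) (nhds 0) := by
      simpa using (continuous_neg.tendsto (0:ℝ))
    have h2 := hcont.eventually h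
    refine h2.mono fun t ht => ?_
    have e1 : |-a + -t| = |a + t| := by rw [← abs_neg]; ring_nf
    have e2 : |-a| = |a| := abs_neg a
    have e3 : Real.sign (-a) = - Real.sign a := Real.sign_neg
    rw [e1, e2, e3] at ht
    calc |(|a + t| ^ q - |a| ^ q - q * Real.sign a * |a| ^ (q-1) * t
        - q * (q-1) * |a| ^ (q-2) / 2 * t ^ 2)|
        = |(|a + t| ^ q - |a| ^ q - q * (-Real.sign a) * |a| ^ (q-1) * (-t)
          - q * (q-1) * |a| ^ (q-2) / 2 * (-t) ^ 2)| := by ring_nf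
      _ ≤ ε * (-t) ^ 2 := ht
      _ = ε * t ^ 2 := by ring
  · exact taylor_aux_pos q a hpos ε hε

private lemma quad_coercive (N : ℕ) (I : Finset (Fin N)) (M : Fin N → Fin N → ℝ)
    (c : Fin N → ℝ)
    (hpos : ∀ h : Fin N → ℝ, (∀ i ∉ I, h i = 0) → h ≠ 0 →
      0 < (∑ i ∈ I, ∑ j ∈ I, h i * M i j * h j) + ∑ i ∈ I, c i * h i ^ 2) :
    ∃ C > 0, ∀ h : Fin N → ℝ, (∀ i ∉ I, h i = 0) →
      C * ∑ i ∈ I, h i ^ 2 ≤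
        (∑ i ∈ I, ∑ j ∈ I, h i * M i j * h j) + ∑ i ∈ I, c i * h i ^ 2 := by
  set F : (Fin N → ℝ) → ℝ := fun h =>
    (∑ i ∈ I, ∑ j ∈ I, h i * M i j * h j) + ∑ i ∈ I, c i * h i ^ 2 with hF
  have hscale : ∀ (t : ℝ) (h : Fin N → ℝ), F (fun i => t * h i) = t ^ 2 * F h := by
    intro t h
    simp only [hF, mul_add, Finset.mul_sum]
    congr 1
    · exact Finset.sum_congr rfl fun i _ => Finset.sum_congr rfl fun j _ => by ring
    · exact Finset.sum_congr rfl fun i _ => by ring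
  have hFcont : Continuous F := by
    apply Continuous.add
    · exact continuous_finset_sum _ fun i _ => continuous_finset_sum _ fun j _ =>
        (((continuous_apply i).mul continuous_const).mul (continuous_apply j))
    · exact continuous_finset_sum _ fun i _ =>
        continuous_const.mul ((continuous_apply i).pow 2)
  rcases I.eq_empty_or_nonempty with hIe | ⟨i₀, hi₀⟩
  · refine ⟨1, one_pos, fun h _ => ?_⟩
    simp [hIe]
  · set S : Set (Fin N → ℝ) := {h | (∀ i ∉ I, h i = 0) ∧ ∑ i ∈ I, h i ^ 2 = 1} with hS
    have hSne : S.Nonempty := by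
      refine ⟨fun i => if i = i₀ then 1 else 0, fun i hi => ?_, ?_⟩
      · simp only [ite_eq_right_iff]
        intro he; exact absurd (he ▸ hi₀) hi
      · rw [Finset.sum_eq_single i₀] <;> simp_all
    have hSclosed : IsClosed S := by
      have h1 : IsClosed {h : Fin N → ℝ | ∀ i ∉ I, h i = 0} := by
        have : {h : Fin N → ℝ | ∀ i ∉ I, h i = 0} =
            ⋂ i, {h : Fin N → ℝ | i ∉ I → h i = 0} := by
          ext h; simp [Set.mem_iInter]
        rw [this]
        refine isClosed_iInter fun i => ?_
        by_cases hi : i ∈ I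
        · simp [hi]
        · have : {h : Fin N → ℝ | i ∉ I → h i = 0} = (fun h : Fin N → ℝ => h i) ⁻¹' {0} := by
            ext h; simp [hi]
          rw [this]
          exact isClosed_singleton.preimage (continuous_apply i)
      have h2 : IsClosed {h : Fin N → ℝ | ∑ i ∈ I, h i ^ 2 = 1} :=
        IsClosed.preimage (continuous_finset_sum _ fun i _ => (continuous_apply i).pow 2)
          (isClosed_singleton (x := (1:ℝ)))
      exact h1.inter h2
    have hSsub : S ⊆ Set.univ.pi fun _ => Set.Icc (-1 : ℝ) 1 := by
      intro h ⟨hsupp, hsum⟩ i _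
      rw [Set.mem_Icc, ← abs_le, ← Real.sqrt_one, ← hsum]
      by_cases hi : i ∈ I
      · rw [← Real.sqrt_sq_eq_abs]
        exact Real.sqrt_le_sqrt (Finset.single_le_sum (fun j _ => sq_nonneg (h j)) hi)
      · simp [hsupp i hi, Real.sqrt_nonneg]
    have hScompact : IsCompact S :=
      (isCompact_univ_pi fun _ => isCompact_Icc).of_isClosed_subset hSclosed hSsub
    obtain ⟨w, hwS, hwmin⟩ := hScompact.exists_isMinOn hSne hFcont.continuousOn
    have hw0 : w ≠ 0 := by
      intro h0
      have := hwS.2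
      rw [h0] at this
      simp at this
    have hC : 0 < F w := hpos w hwS.1 hw0
    refine ⟨F w, hC, fun h hsupp => ?_⟩
    show F w * ∑ i ∈ I, h i ^ 2 ≤ F h
    by_cases hs : ∑ i ∈ I, h i ^ 2 = 0
    · have hz : ∀ i ∈ I, h i = 0 := by
        intro i hi
        have := (Finset.sum_eq_zero_iff_of_nonneg (fun j _ => sq_nonneg (h j))).mp hs i hi
        exact pow_eq_zero_iff (n := 2) (by norm_num) |>.mp this
      have hFh : F h = 0 := by
        have e1 : ∑ i ∈ I, ∑ j ∈ I, h i * M i j * h j = 0 :=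
          Finset.sum_eq_zero fun i hi => Finset.sum_eq_zero fun j _ => by rw [hz i hi]; ring
        have e2 : ∑ i ∈ I, c i * h i ^ 2 = 0 :=
          Finset.sum_eq_zero fun i hi => by rw [hz i hi]; ring
        simp only [hF, e1, e2, add_zero]
      rw [hs, hFh, mul_zero]
    · have hspos : 0 < ∑ i ∈ I, h i ^ 2 :=
        lt_of_le_of_ne (Finset.sum_nonneg fun j _ => sq_nonneg (h j)) (Ne.symm hs)
      set s := ∑ i ∈ I, h i ^ 2 with hsdef
      set w' : Fin N → ℝ := fun i => (Real.sqrt s)⁻¹ * h i with hw'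
      have hw'S : w' ∈ S := by
        constructor
        · intro i hi; simp [hw', hsupp i hi]
        · have : ∑ i ∈ I, w' i ^ 2 = (Real.sqrt s)⁻¹ ^ 2 * s := by
            rw [Finset.mul_sum]
            exact Finset.sum_congr rfl fun i _ => by rw [hw']; ring
          rw [this, inv_pow, Real.sq_sqrt hspos.le, inv_mul_cancel₀ hs]
      have hmin := hwmin hw'S
      rw [Set.mem_setOf_eq] at hmin
      have hFw' : F w' = ((Real.sqrt s)⁻¹) ^ 2 * F h := hscale _ h
      rw [hFw', inv_pow, Real.sq_sqrt hspos.le] at hmin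
      calc F w * s ≤ (s⁻¹ * F h) * s := mul_le_mul_of_nonneg_right hmin hspos.le
        _ = F h := by field_simp

set_option maxHeartbeats 1000000 in
/-- Theorem 3.6: if `x*` satisfies the first-order condition on its support `I`
and the restricted second-order matrix `A_IᵀA_I + λq(q−1)Λ(x*_I)` is positive
definite, then `x*` is a strict local minimizer of
`T_λ(x) = ½‖Ax−y‖₂² + λ∑|xᵢ|^q`. -/
theorem gaita_local_minimizer (m N : ℕ) (A : Matrix (Fin m) (Fin N) ℝ)
    (y : Fin m → ℝ) (q lam : ℝ) (hq0 : 0 < q) (hq1 : q < 1) (hlam : 0 < lam)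
    (T : (Fin N → ℝ) → ℝ)
    (hT : ∀ x, T x = (1 / 2) * ∑ k, (A.mulVec x k - y k) ^ 2 + lam * ∑ i, |x i| ^ q)
    (xstar : Fin N → ℝ) (I : Finset (Fin N)) (hI : ∀ i, i ∈ I ↔ xstar i ≠ 0)
    (hfirst : ∀ i ∈ I, (∑ k, A k i * (A.mulVec xstar k - y k)) +
      lam * q * Real.sign (xstar i) * |xstar i| ^ (q - 1) = 0)
    (hsecond : ∀ h : Fin N → ℝ, (∀ i ∉ I, h i = 0) → h ≠ 0 →
      0 < (∑ i ∈ I, ∑ j ∈ I, h i * (∑ l, A l i * A l j) * h j) +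
        lam * q * (q - 1) * ∑ i ∈ I, |xstar i| ^ (q - 2) * h i ^ 2) :
    ∃ ε > 0, ∀ x : Fin N → ℝ, x ≠ xstar →
      Real.sqrt (∑ i, (x i - xstar i) ^ 2) < ε → T xstar < T x := by
  classical
  -- notation
  set r : Fin m → ℝ := fun k => A.mulVec xstar k - y k with hr
  set g : Fin N → ℝ := fun i => ∑ k, A k i * r k with hg
  set Mm : Fin N → Fin N → ℝ := fun i j => ∑ l, A l i * A l j with hMm
  set cc : Fin N → ℝ := fun i => lam * (q * (q - 1) * |xstar i| ^ (q - 2)) with hcc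
  -- coercivity constant
  have hsecond' : ∀ h : Fin N → ℝ, (∀ i ∉ I, h i = 0) → h ≠ 0 →
      0 < (∑ i ∈ I, ∑ j ∈ I, h i * Mm i j * h j) + ∑ i ∈ I, cc i * h i ^ 2 := by
    intro h hs hn
    have h1 := hsecond h hs hn
    have e : ∑ i ∈ I, cc i * h i ^ 2
        = lam * q * (q - 1) * ∑ i ∈ I, |xstar i| ^ (q - 2) * h i ^ 2 := by
      rw [Finset.mul_sum]
      exact Finset.sum_congr rfl fun i _ => by simp only [hcc]; ring
    rw [e]
    exact h1
  obtain ⟨C, hC, hC2⟩ := quad_coercive N I Mm cc hsecond'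
  -- constants
  set K₀ : ℝ := 1 + ∑ i, ∑ j, |Mm i j| with hK₀
  have hK₀pos : 0 < K₀ := by
    have : (0:ℝ) ≤ ∑ i, ∑ j, |Mm i j| :=
      Finset.sum_nonneg fun i _ => Finset.sum_nonneg fun j _ => abs_nonneg _
    simp only [hK₀]; linarith only [this]
  have hK₀bd : ∀ i j, |Mm i j| ≤ K₀ := by
    intro i j
    have h1 : |Mm i j| ≤ ∑ j', |Mm i j'| :=
      Finset.single_le_sum (f := fun j' => |Mm i j'|) (fun j' _ => abs_nonneg _) (Finset.mem_univ j)
    have h2 : ∑ j', |Mm i j'| ≤ ∑ i', ∑ j', |Mm i' j'| :=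
      Finset.single_le_sum (f := fun i' => ∑ j', |Mm i' j'|)
        (fun i' _ => Finset.sum_nonneg fun j' _ => abs_nonneg _) (Finset.mem_univ i)
    simp only [hK₀]; linarith only [h1, h2]
  set K : ℝ := (N + 1) * K₀ with hK
  have hKpos : 0 < K := by positivity
  set G : ℝ := 1 + ∑ i, |g i| with hG
  have hGbd : ∀ i, |g i| ≤ G := by
    intro i
    have h1 : |g i| ≤ ∑ i', |g i'| :=
      Finset.single_le_sum (f := fun i' => |g i'|) (fun i' _ => abs_nonneg _) (Finset.mem_univ i)
    simp only [hG]; linarith only [h1]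
  have hGpos : 0 < G := by
    have : (0:ℝ) ≤ ∑ i, |g i| := Finset.sum_nonneg fun i _ => abs_nonneg _
    simp only [hG]; linarith only [this]
  set θ : ℝ := C / (8 * (N + 1)) with hθ
  have hθpos : 0 < θ := by simp only [hθ]; positivity
  set C' : ℝ := K ^ 2 / (4 * θ) with hC'def
  have hC'pos : 0 < C' := by simp only [hC'def]; positivity
  set ε₀ : ℝ := C / (8 * lam) with hε₀
  have hε₀pos : 0 < ε₀ := by simp only [hε₀]; positivity
  -- Taylor radius
  have htay : ∀ᶠ t in nhds (0:ℝ), ∀ i ∈ I,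
      |(|xstar i + t| ^ q - |xstar i| ^ q - q * Real.sign (xstar i) * |xstar i| ^ (q-1) * t
        - q * (q-1) * |xstar i| ^ (q-2) / 2 * t ^ 2)| ≤ ε₀ * t ^ 2 := by
    rw [Finset.eventually_all]
    intro i hi
    exact taylor_aux q (xstar i) ((hI i).mp hi) ε₀ hε₀pos
  rw [Metric.eventually_nhds_iff] at htay
  obtain ⟨δ₂, hδ₂pos, hδ₂⟩ := htay
  -- off-support radius
  set B₁ : ℝ := (G + C' + 1) / lam with hB₁
  have hB₁pos : 0 < B₁ := by simp only [hB₁]; positivity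
  set δ₁ : ℝ := B₁ ^ (1 / (q - 1)) with hδ₁def
  have hδ₁pos : 0 < δ₁ := Real.rpow_pos_of_pos hB₁pos _
  have hδ₁prop : ∀ t : ℝ, 0 < t → t ≤ δ₁ → G + C' + 1 ≤ lam * t ^ (q - 1) := by
    intro t ht htle
    have h1 : δ₁ ^ (q - 1) ≤ t ^ (q - 1) :=
      Real.rpow_le_rpow_of_nonpos ht htle (by linarith only [hq1])
    have h2 : δ₁ ^ (q - 1) = B₁ := by
      rw [hδ₁def, ← Real.rpow_mul hB₁pos.le]
      have e : 1 / (q - 1) * (q - 1) = 1 :=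
        one_div_mul_cancel (sub_ne_zero.mpr hq1.ne)
      rw [e, Real.rpow_one]
    have h3 : lam * B₁ = G + C' + 1 := by
      rw [hB₁]; field_simp
    rw [h2] at h1
    calc G + C' + 1 = lam * B₁ := h3.symm
      _ ≤ lam * t ^ (q - 1) := mul_le_mul_of_nonneg_left h1 hlam.le
  refine ⟨min δ₂ (min 1 δ₁), lt_min hδ₂pos (lt_min one_pos hδ₁pos), ?_⟩
  intro x hxne hnear
  set h : Fin N → ℝ := fun i => x i - xstar i with hh
  have hxeq : ∀ i, x i = xstar i + h i := fun i => by simp [hh]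
  have hcoord : ∀ i, |h i| < min δ₂ (min 1 δ₁) := by
    intro i
    have h1 : h i ^ 2 ≤ ∑ j, (x j - xstar j) ^ 2 := by
      refine Finset.single_le_sum (f := fun j => (x j - xstar j) ^ 2)
        (fun j _ => sq_nonneg _) (Finset.mem_univ i)
    calc |h i| = Real.sqrt (h i ^ 2) := (Real.sqrt_sq_eq_abs _).symm
      _ ≤ Real.sqrt (∑ j, (x j - xstar j) ^ 2) := Real.sqrt_le_sqrt h1
      _ < _ := hnear
  have hcoord₂ : ∀ i, |h i| < δ₂ := fun i => lt_of_lt_of_le (hcoord i) (min_le_left _ _)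
  have hcoord1 : ∀ i, |h i| ≤ 1 := fun i =>
    le_of_lt (lt_of_lt_of_le (hcoord i) ((min_le_right _ _).trans (min_le_left _ _)))
  have hcoordδ₁ : ∀ i, |h i| ≤ δ₁ := fun i =>
    le_of_lt (lt_of_lt_of_le (hcoord i) ((min_le_right _ _).trans (min_le_right _ _)))
  have hne : ∃ i, h i ≠ 0 := by
    by_contra hcon
    push_neg at hcon
    exact hxne (funext fun i => by have := hcon i; simp only [hh] at this; linarith only [this])
  -- decomposition of the residual
  set P : Fin m → ℝ := fun k => ∑ i ∈ I, A k i * h i with hP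
  set Qc : Fin m → ℝ := fun k => ∑ i ∈ Iᶜ, A k i * h i with hQc
  have hmv : ∀ k, A.mulVec x k - y k = r k + (P k + Qc k) := by
    intro k
    have e1 : A.mulVec x k = A.mulVec xstar k + ∑ i, A k i * h i := by
      simp only [Matrix.mulVec, dotProduct]
      rw [← Finset.sum_add_distrib]
      exact Finset.sum_congr rfl fun i _ => by rw [hxeq i]; ring
    have e2 : ∑ i, A k i * h i = P k + Qc k := by
      rw [hP, hQc]
      exact (Finset.sum_add_sum_compl I _).symm
    simp only [hr]
    rw [e1, e2]; ring
  have hquad : (1/2) * ∑ k, (A.mulVec x k - y k)^2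
      = (1/2) * ∑ k, r k ^ 2 + (∑ k, r k * P k + ∑ k, r k * Qc k)
        + ((1/2) * ∑ k, P k ^ 2 + ∑ k, P k * Qc k + (1/2) * ∑ k, Qc k ^ 2) := by
    have e1 : ∀ k ∈ Finset.univ (α := Fin m), (A.mulVec x k - y k)^2
        = r k ^ 2 + 2*(r k * P k) + 2*(r k * Qc k) + P k ^ 2 + 2*(P k * Qc k) + Qc k ^ 2 :=
      fun k _ => by rw [hmv k]; ring
    rw [Finset.sum_congr rfl e1]
    simp only [Finset.sum_add_distrib, ← Finset.mul_sum]
    ring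
  have hrP : ∑ k, r k * P k = ∑ i ∈ I, h i * g i := by
    simp only [hP, Finset.mul_sum]
    rw [Finset.sum_comm]
    refine Finset.sum_congr rfl fun i _ => ?_
    simp only [hg, Finset.mul_sum]
    exact Finset.sum_congr rfl fun k _ => by ring
  have hrQ : ∑ k, r k * Qc k = ∑ j ∈ Iᶜ, h j * g j := by
    simp only [hQc, Finset.mul_sum]
    rw [Finset.sum_comm]
    refine Finset.sum_congr rfl fun j _ => ?_
    simp only [hg, Finset.mul_sum]
    exact Finset.sum_congr rfl fun k _ => by ring
  have hPP : ∑ k, P k ^ 2 = ∑ i ∈ I, ∑ j ∈ I, h i * Mm i j * h j := by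
    simp only [hP, sq, Finset.sum_mul_sum]
    rw [Finset.sum_comm]
    refine Finset.sum_congr rfl fun i _ => ?_
    rw [Finset.sum_comm]
    refine Finset.sum_congr rfl fun j _ => ?_
    simp only [hMm, Finset.mul_sum, Finset.sum_mul]
    exact Finset.sum_congr rfl fun k _ => by ring
  have hPQ : ∑ k, P k * Qc k = ∑ i ∈ I, ∑ j ∈ Iᶜ, h i * Mm i j * h j := by
    simp only [hP, hQc, Finset.sum_mul_sum]
    rw [Finset.sum_comm]
    refine Finset.sum_congr rfl fun i _ => ?_
    rw [Finset.sum_comm]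
    refine Finset.sum_congr rfl fun j _ => ?_
    simp only [hMm, Finset.mul_sum, Finset.sum_mul]
    exact Finset.sum_congr rfl fun k _ => by ring
  have hpen : ∑ i, |x i| ^ q = ∑ i ∈ I, |xstar i + h i| ^ q + ∑ i ∈ Iᶜ, |h i| ^ q := by
    rw [← Finset.sum_add_sum_compl I]
    congr 1
    · exact Finset.sum_congr rfl fun i _ => by rw [hxeq i]
    · refine Finset.sum_congr rfl fun i hi => ?_
      have h0 : xstar i = 0 := by
        by_contra hx0; exact (Finset.mem_compl.mp hi) ((hI i).mpr hx0)
      rw [hxeq i, h0, zero_add]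
  have hpen0 : ∑ i, |xstar i| ^ q = ∑ i ∈ I, |xstar i| ^ q := by
    rw [← Finset.sum_add_sum_compl I]
    have e : ∑ i ∈ Iᶜ, |xstar i| ^ q = 0 := Finset.sum_eq_zero fun i hi => by
      have h0 : xstar i = 0 := by
        by_contra hx0; exact (Finset.mem_compl.mp hi) ((hI i).mpr hx0)
      rw [h0, abs_zero, Real.zero_rpow hq0.ne']
    rw [e, add_zero]
  set ρ : Fin N → ℝ := fun i => |xstar i + h i| ^ q - |xstar i| ^ q
      - q * Real.sign (xstar i) * |xstar i| ^ (q-1) * h i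
      - q * (q-1) * |xstar i| ^ (q-2) / 2 * h i ^ 2 with hρ
  have hIterm : ∑ i ∈ I, h i * g i
        + lam * (∑ i ∈ I, |xstar i + h i| ^ q - ∑ i ∈ I, |xstar i| ^ q)
      = lam * ∑ i ∈ I, ρ i
        + lam * q * (q-1) / 2 * ∑ i ∈ I, |xstar i| ^ (q-2) * h i ^ 2 := by
    rw [← Finset.sum_sub_distrib, Finset.mul_sum, Finset.mul_sum, Finset.mul_sum,
      ← Finset.sum_add_distrib, ← Finset.sum_add_distrib]
    refine Finset.sum_congr rfl fun i hi => ?_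
    have hgi : g i = -(lam * q * Real.sign (xstar i) * |xstar i| ^ (q - 1)) := by
      have h1 := hfirst i hi
      simp only [hg, hr]
      linarith only [h1]
    rw [hgi]
    simp only [hρ]
    ring
  have e_off : ∑ j ∈ Iᶜ, (h j * g j + lam * |h j| ^ q)
      = ∑ j ∈ Iᶜ, h j * g j + lam * ∑ j ∈ Iᶜ, |h j| ^ q := by
    rw [Finset.sum_add_distrib, Finset.mul_sum]
  have hTxstar : T xstar = (1/2) * ∑ k, r k ^ 2 + lam * ∑ i ∈ I, |xstar i| ^ q := by
    rw [hT xstar, hpen0]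
  have hkey : T x - T xstar
      = lam * ∑ i ∈ I, ρ i
        + ((1/2) * ∑ i ∈ I, ∑ j ∈ I, h i * Mm i j * h j
           + lam * q * (q-1) / 2 * ∑ i ∈ I, |xstar i| ^ (q-2) * h i ^ 2)
        + ∑ i ∈ I, ∑ j ∈ Iᶜ, h i * Mm i j * h j
        + (1/2) * ∑ k, Qc k ^ 2
        + ∑ j ∈ Iᶜ, (h j * g j + lam * |h j| ^ q) := by
    rw [hT x, hquad, hrP, hrQ, hPP, hPQ, hpen, hTxstar]
    linear_combination hIterm - e_off
  -- estimates
  set S : ℝ := ∑ i ∈ I, h i ^ 2 with hSdef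
  have hSnn : 0 ≤ S := Finset.sum_nonneg fun i _ => sq_nonneg _
  set V : ℝ := ∑ j ∈ Iᶜ, h j ^ 2 with hVdef
  have hVnn : 0 ≤ V := Finset.sum_nonneg fun j _ => sq_nonneg _
  -- L1 : coercivity
  have L1 : C * S ≤ ∑ i ∈ I, ∑ j ∈ I, h i * Mm i j * h j
      + lam * q * (q-1) * ∑ i ∈ I, |xstar i| ^ (q-2) * h i ^ 2 := by
    set u : Fin N → ℝ := fun i => if i ∈ I then h i else 0 with hu
    have husupp : ∀ i ∉ I, u i = 0 := fun i hi => by simp [hu, hi]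
    have h1 := hC2 u husupp
    have e1 : ∑ i ∈ I, u i ^ 2 = S := Finset.sum_congr rfl fun i hi => by simp [hu, hi]
    have e2 : ∑ i ∈ I, ∑ j ∈ I, u i * Mm i j * u j
        = ∑ i ∈ I, ∑ j ∈ I, h i * Mm i j * h j :=
      Finset.sum_congr rfl fun i hi => Finset.sum_congr rfl fun j hj => by simp [hu, hi, hj]
    have e3 : ∑ i ∈ I, cc i * u i ^ 2
        = lam * q * (q-1) * ∑ i ∈ I, |xstar i| ^ (q-2) * h i ^ 2 := by
      rw [Finset.mul_sum]
      exact Finset.sum_congr rfl fun i hi => by simp only [hu, hcc, if_pos hi]; ring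
    rw [e1, e2, e3] at h1
    exact h1
  -- L2 : Taylor remainder bound
  have hρbd : ∀ i ∈ I, |ρ i| ≤ ε₀ * h i ^ 2 := by
    intro i hi
    have hd : dist (h i) 0 < δ₂ := by
      rw [Real.dist_eq, sub_zero]; exact hcoord₂ i
    have := hδ₂ hd i hi
    simpa [hρ] using this
  have L2 : -(C/8 * S) ≤ lam * ∑ i ∈ I, ρ i := by
    have h1 : ∑ i ∈ I, -(ε₀ * h i ^ 2) ≤ ∑ i ∈ I, ρ i :=
      Finset.sum_le_sum fun i hi => (abs_le.mp (hρbd i hi)).1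
    have h2 : ∑ i ∈ I, -(ε₀ * h i ^ 2) = -(ε₀ * S) := by
      rw [hSdef, Finset.mul_sum, ← Finset.sum_neg_distrib]
    rw [h2] at h1
    have h3 : lam * -(ε₀ * S) ≤ lam * ∑ i ∈ I, ρ i :=
      mul_le_mul_of_nonneg_left h1 hlam.le
    have h4 : lam * ε₀ = C / 8 := by
      rw [hε₀]; field_simp
    have h5 : lam * -(ε₀ * S) = -(C/8 * S) := by linear_combination (-S) * h4
    linarith only [h3, h5]
  -- L3 : cross term bound
  have hsqrtS : ∀ i ∈ I, |h i| ≤ Real.sqrt S := by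
    intro i hi
    rw [← Real.sqrt_sq_eq_abs]
    exact Real.sqrt_le_sqrt (Finset.single_le_sum (f := fun i => h i ^ 2)
      (fun j _ => sq_nonneg _) hi)
  have hC'e : 4 * θ * C' = K ^ 2 := by
    rw [hC'def]; field_simp
  have hcardI : (I.card : ℝ) ≤ (N : ℝ) := by
    have h1 := Finset.card_le_univ I
    simp only [Finset.card_univ, Fintype.card_fin] at h1
    exact_mod_cast h1
  have hcardIc : ((Iᶜ : Finset (Fin N)).card : ℝ) ≤ (N : ℝ) := by
    have h1 := Finset.card_le_univ Iᶜ
    simp only [Finset.card_univ, Fintype.card_fin] at h1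
    exact_mod_cast h1
  have L3 : -(C/8 * S + C' * V) ≤ ∑ i ∈ I, ∑ j ∈ Iᶜ, h i * Mm i j * h j := by
    rw [Finset.sum_comm]
    have hinner : ∀ j ∈ Iᶜ, -(θ * S + C' * h j ^ 2) ≤ ∑ i ∈ I, h i * Mm i j * h j := by
      intro j _
      have habs : |∑ i ∈ I, h i * Mm i j * h j| ≤ θ * S + C' * h j ^ 2 := by
        calc |∑ i ∈ I, h i * Mm i j * h j| ≤ ∑ i ∈ I, |h i * Mm i j * h j| :=
              Finset.abs_sum_le_sum_abs _ _
          _ ≤ ∑ _i ∈ I, Real.sqrt S * K₀ * |h j| := by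
              refine Finset.sum_le_sum fun i hi => ?_
              rw [abs_mul, abs_mul]
              exact mul_le_mul_of_nonneg_right
                (mul_le_mul (hsqrtS i hi) (hK₀bd i j) (abs_nonneg _) (Real.sqrt_nonneg S))
                (abs_nonneg (h j))
          _ = (I.card : ℝ) * (Real.sqrt S * K₀ * |h j|) := by
              rw [Finset.sum_const, nsmul_eq_mul]
          _ ≤ ((N : ℝ) + 1) * (Real.sqrt S * K₀ * |h j|) := by
              have hnn : 0 ≤ Real.sqrt S * K₀ * |h j| :=
                mul_nonneg (mul_nonneg (Real.sqrt_nonneg S) hK₀pos.le) (abs_nonneg (h j))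
              exact mul_le_mul_of_nonneg_right (by linarith only [hcardI]) hnn
          _ = K * Real.sqrt S * |h j| := by rw [hK]; ring
          _ ≤ θ * S + C' * h j ^ 2 := by
              have key : (2*θ*Real.sqrt S - K*|h j|)^2
                  = 4*θ*(θ*S + C'*h j^2) - 4*θ*(K*Real.sqrt S*|h j|) := by
                linear_combination (4*θ^2) * (Real.sq_sqrt hSnn)
                  + K^2 * (sq_abs (h j)) - (h j^2) * hC'e
              have hq4 : 4 * θ * (K * Real.sqrt S * |h j|)
                  ≤ 4 * θ * (θ * S + C' * h j ^ 2) := by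
                linarith only [sq_nonneg (2 * θ * Real.sqrt S - K * |h j|), key]
              exact (mul_le_mul_iff_right₀ (by linarith only [hθpos])).mp hq4
      linarith only [(abs_le.mp habs).1]
    calc -(C/8 * S + C' * V)
        ≤ ∑ j ∈ Iᶜ, -(θ * S + C' * h j ^ 2) := by
          rw [Finset.sum_neg_distrib, Finset.sum_add_distrib, Finset.sum_const,
            nsmul_eq_mul, ← Finset.mul_sum, ← hVdef]
          have hNθ : ((N : ℝ) + 1) * θ = C / 8 := by
            rw [hθ]; field_simp
          have p1 : 0 ≤ θ * S := mul_nonneg hθpos.le hSnn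
          have p2 : ((N:ℝ)+1) * (θ * S) = C/8 * S := by linear_combination S * hNθ
          have : ((Iᶜ : Finset (Fin N)).card : ℝ) * (θ * S) ≤ C / 8 * S := by
            nlinarith only [hcardIc, p1, p2]
          linarith only [this]
      _ ≤ _ := Finset.sum_le_sum hinner
  -- L4 : off-support terms
  have L4 : ∀ j ∈ Iᶜ, |h j| + C' * h j ^ 2 ≤ h j * g j + lam * |h j| ^ q := by
    intro j _
    by_cases hj0 : h j = 0
    · simp [hj0, Real.zero_rpow hq0.ne']
    · have htpos : 0 < |h j| := abs_pos.mpr hj0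
      have h1 : G + C' + 1 ≤ lam * |h j| ^ (q - 1) := hδ₁prop _ htpos (hcoordδ₁ j)
      have h2 : |h j| ^ q = |h j| * |h j| ^ (q - 1) := by
        nth_rewrite 1 [show q = 1 + (q - 1) by ring]
        rw [Real.rpow_add htpos, Real.rpow_one]
      have h3 : -( |h j| * G) ≤ h j * g j := by
        have := hGbd j
        nlinarith only [neg_abs_le (h j * g j), abs_mul (h j) (g j), abs_nonneg (h j), this]
      have h4 : C' * h j ^ 2 ≤ C' * |h j| := by
        have h41 : h j ^ 2 ≤ |h j| := by
          nlinarith only [sq_abs (h j), abs_nonneg (h j), hcoord1 j]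
        exact mul_le_mul_of_nonneg_left h41 hC'pos.le
      have h5 : |h j| * (G + C' + 1) ≤ |h j| * (lam * |h j| ^ (q - 1)) :=
        mul_le_mul_of_nonneg_left h1 htpos.le
      rw [h2]
      linarith only [h3, h4, h5]
  -- assemble
  have hQcnn : 0 ≤ ∑ k, Qc k ^ 2 := Finset.sum_nonneg fun k _ => sq_nonneg _
  have hoff : ∑ j ∈ Iᶜ, |h j| + C' * V ≤ ∑ j ∈ Iᶜ, (h j * g j + lam * |h j| ^ q) := by
    have h1 : ∑ j ∈ Iᶜ, (|h j| + C' * h j ^ 2)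
        ≤ ∑ j ∈ Iᶜ, (h j * g j + lam * |h j| ^ q) := Finset.sum_le_sum L4
    have h2 : ∑ j ∈ Iᶜ, (|h j| + C' * h j ^ 2) = ∑ j ∈ Iᶜ, |h j| + C' * V := by
      rw [Finset.sum_add_distrib, hVdef, Finset.mul_sum]
    linarith only [h1, h2]
  have habs_nn : 0 ≤ ∑ j ∈ Iᶜ, |h j| := Finset.sum_nonneg fun j _ => abs_nonneg _
  have hposS : 0 < C/4 * S + ∑ j ∈ Iᶜ, |h j| := by
    obtain ⟨i0, hi0⟩ := hne
    by_cases hi0I : i0 ∈ I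
    · have : h i0 ^ 2 ≤ S :=
        Finset.single_le_sum (f := fun i => h i ^ 2) (fun j _ => sq_nonneg _) hi0I
      have hsq : 0 < h i0 ^ 2 := by positivity
      nlinarith only [this, hsq, habs_nn, hC, hSnn]
    · have hmem : i0 ∈ Iᶜ := Finset.mem_compl.mpr hi0I
      have hs1 : |h i0| ≤ ∑ j ∈ Iᶜ, |h j| :=
        Finset.single_le_sum (f := fun j => |h j|) (fun j _ => abs_nonneg _) hmem
      have hs2 : 0 < |h i0| := abs_pos.mpr hi0
      have hs3 : 0 ≤ C/4 * S := mul_nonneg (le_of_lt (by linarith only [hC])) hSnn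
      linarith only [hs1, hs2, hs3]
  linarith only [hkey, L1, L2, L3, hoff, hQcnn, hposS]
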